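/- (Uniform non-characteristic lower bound for homogeneous phases, inequality (A.1.7)) Let n, N ≥ 1, let U ⊆ ℝ^n be open, K ⊆ U compact, and let φ : U × (ℝ^N ∖ {0}) → ℝ be C¹ and positively homogeneous of degree 1 in θ (φ(x,λθ) = λφ(x,θ) for λ > 0). Assume dφ ≠ 0, i.e. ∂_x φ(x,θ) and ∂_θ φ(x,θ) never vanish simultaneously on K × (ℝ^N∖{0}). Let A ⊆ ℝ^N ∖ {0} and V ⊆ ℝ^n ∖ {0} be closed cones such that for all x ∈ K and θ ∈ A with ∂_θ φ(x,θ) = 0 one has ∂_x φ(x,θ) ∉ V. Then there exists c > 0 such that for all x ∈ K, θ ∈ A and ξ ∈ V: |∂_x φ(x,θ) − ξ| + |θ| · |∂_θ φ(x,θ)| ≥ c (|θ| + |ξ|). -/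

import Mathlib

open scoped BigOperators Real
open MeasureTheory

noncomputable section

variable {n m : ℕ} {E : Type*} [NormedAddCommGroup E] [NormedSpace ℝ E]

/-- Partial derivative in the `i`-th coordinate of the first factor. -/
def pdx (i : Fin n) (f : (Fin n → ℝ) × (Fin m → ℝ) → E) :
    (Fin n → ℝ) × (Fin m → ℝ) → E :=
  fun p => fderiv ℝ f p (Pi.single i 1, 0)

/-- Partial derivative in the `j`-th coordinate of the second factor. -/
def pdy (j : Fin m) (f : (Fin n → ℝ) × (Fin m → ℝ) → E) :
    (Fin n → ℝ) × (Fin m → ℝ) → E :=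
  fun p => fderiv ℝ f p (0, Pi.single j 1)

/-- Iterated partial derivative ∂_x^α in the first factor. -/
def mdx (α : Fin n → ℕ) (f : (Fin n → ℝ) × (Fin m → ℝ) → E) :
    (Fin n → ℝ) × (Fin m → ℝ) → E :=
  (List.finRange n).foldr (fun i g => (pdx i)^[α i] g) f

/-- Iterated partial derivative ∂_y^β in the second factor. -/
def mdy (β : Fin m → ℕ) (f : (Fin n → ℝ) × (Fin m → ℝ) → E) :
    (Fin n → ℝ) × (Fin m → ℝ) → E :=
  (List.finRange m).foldr (fun j g => (pdy j)^[β j] g) f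

/-- Partial derivative on a single Euclidean factor. -/
def pd {d : ℕ} (i : Fin d) (f : (Fin d → ℝ) → E) : (Fin d → ℝ) → E :=
  fun x => fderiv ℝ f x (Pi.single i 1)

/-- Iterated partial derivative ∂^α on a single Euclidean factor. -/
def md {d : ℕ} (α : Fin d → ℕ) (f : (Fin d → ℝ) → E) : (Fin d → ℝ) → E :=
  (List.finRange d).foldr (fun i g => (pd i)^[α i] g) f

/-- Multi-index factorial `α!`. -/
def mfact {d : ℕ} (α : Fin d → ℕ) : ℕ := ∏ i, (α i).factorial

/-- Multi-index length `|α|`. -/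
def msize {d : ℕ} (α : Fin d → ℕ) : ℕ := ∑ i, α i

/-- **Uniform non-characteristic lower bound for homogeneous phases** (inequality (A.1.7)): if
`φ(x,θ)` is `C¹`, positively homogeneous of degree 1 in `θ`, with `dφ ≠ 0`, and the closed
cones `A`, `V` satisfy `∂_xφ(x,θ) ∉ V` whenever `∂_θφ(x,θ) = 0` with `x ∈ K`, `θ ∈ A`, then
`|∂_xφ(x,θ) − ξ| + |θ|·|∂_θφ(x,θ)| ≥ c(|θ| + |ξ|)` uniformly on `K × A × V`. -/
theorem homogeneous_noncharacteristic_lower_bound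
    (n N : ℕ) (hn : 1 ≤ n) (hN : 1 ≤ N)
    (U : Set (Fin n → ℝ)) (hU : IsOpen U)
    (K : Set (Fin n → ℝ)) (hK : IsCompact K) (hKU : K ⊆ U)
    (φ : (Fin n → ℝ) × (Fin N → ℝ) → ℝ)
    (hφ : ContDiffOn ℝ 1 φ (U ×ˢ {θ : Fin N → ℝ | θ ≠ 0}))
    (hhom : ∀ x ∈ U, ∀ θ : Fin N → ℝ, θ ≠ 0 → ∀ lam : ℝ, 0 < lam →
      φ (x, lam • θ) = lam * φ (x, θ))
    (hd : ∀ x ∈ K, ∀ θ : Fin N → ℝ, θ ≠ 0 →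
      (∃ i : Fin n, pdx i φ (x, θ) ≠ 0) ∨ (∃ j : Fin N, pdy j φ (x, θ) ≠ 0))
    (A : Set (Fin N → ℝ)) (V : Set (Fin n → ℝ))
    (hA0 : ∀ θ ∈ A, θ ≠ 0)
    (hAcone : ∀ θ ∈ A, ∀ lam : ℝ, 0 < lam → lam • θ ∈ A)
    (hAclosed : ∀ θ : Fin N → ℝ, θ ≠ 0 → θ ∈ closure A → θ ∈ A)
    (hV0 : ∀ ξ ∈ V, ξ ≠ 0)
    (hVcone : ∀ ξ ∈ V, ∀ lam : ℝ, 0 < lam → lam • ξ ∈ V)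
    (hVclosed : ∀ ξ : Fin n → ℝ, ξ ≠ 0 → ξ ∈ closure V → ξ ∈ V)
    (hnc : ∀ x ∈ K, ∀ θ ∈ A, (∀ j : Fin N, pdy j φ (x, θ) = 0) →
      (fun i : Fin n => pdx i φ (x, θ)) ∉ V) :
    ∃ c > 0, ∀ x ∈ K, ∀ θ ∈ A, ∀ ξ ∈ V,
      ‖(fun i : Fin n => pdx i φ (x, θ)) - ξ‖ +
          ‖θ‖ * ‖fun j : Fin N => pdy j φ (x, θ)‖ ≥
        c * (‖θ‖ + ‖ξ‖) := by
  classical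
  set g : (Fin n → ℝ) × (Fin N → ℝ) → (Fin n → ℝ) := fun p => fun i => pdx i φ p with hg
  set h : (Fin n → ℝ) × (Fin N → ℝ) → (Fin N → ℝ) := fun p => fun j => pdy j φ p with hh
  set Ω : Set ((Fin n → ℝ) × (Fin N → ℝ)) := U ×ˢ {θ : Fin N → ℝ | θ ≠ 0} with hΩdef
  have hopen : IsOpen Ω := hU.prod isOpen_ne
  have hdiff : ∀ p ∈ Ω, DifferentiableAt ℝ φ p := fun p hp =>
    (hφ.contDiffAt (hopen.mem_nhds hp)).differentiableAt one_ne_zero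
  have hfd : ContinuousOn (fderiv ℝ φ) Ω := hφ.continuousOn_fderiv_of_isOpen hopen le_rfl
  -- homogeneity of the partial derivatives
  have key : ∀ x ∈ U, ∀ θ : Fin N → ℝ, θ ≠ 0 → ∀ lam : ℝ, 0 < lam →
      g (x, lam • θ) = lam • g (x, θ) ∧ h (x, lam • θ) = h (x, θ) := by
    intro x hx θ hθ lam hlam
    set T : ((Fin n → ℝ) × (Fin N → ℝ)) →L[ℝ] ((Fin n → ℝ) × (Fin N → ℝ)) :=
      (ContinuousLinearMap.id ℝ (Fin n → ℝ)).prodMap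
        (lam • ContinuousLinearMap.id ℝ (Fin N → ℝ)) with hT
    have hTapp : ∀ v : (Fin n → ℝ) × (Fin N → ℝ), T v = (v.1, lam • v.2) := fun v => rfl
    have hmem : (x, θ) ∈ Ω := ⟨hx, hθ⟩
    have hmem' : (x, lam • θ) ∈ Ω := ⟨hx, smul_ne_zero (ne_of_gt hlam) hθ⟩
    have h0 : HasFDerivAt φ (fderiv ℝ φ (x, lam • θ)) (T (x, θ)) := by
      rw [hTapp]
      exact (hdiff _ hmem').hasFDerivAt
    have h1 : HasFDerivAt (φ ∘ T) ((fderiv ℝ φ (x, lam • θ)).comp T) (x, θ) :=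
      h0.comp (x, θ) T.hasFDerivAt
    have h2 : (φ ∘ T) =ᶠ[nhds (x, θ)] fun p => lam * φ p := by
      filter_upwards [hopen.mem_nhds hmem] with p hp
      have hc : (φ ∘ T) p = φ (p.1, lam • p.2) := by rw [Function.comp_apply, hTapp]
      rw [hc]
      exact hhom p.1 hp.1 p.2 hp.2 lam hlam
    have h4 : (fderiv ℝ φ (x, lam • θ)).comp T = lam • fderiv ℝ φ (x, θ) := by
      rw [← h1.fderiv, h2.fderiv_eq, fderiv_const_mul (hdiff _ hmem) lam]
    constructor
    · funext i
      have eT : T ((Pi.single i 1 : Fin n → ℝ), (0 : Fin N → ℝ))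
          = ((Pi.single i 1 : Fin n → ℝ), (0 : Fin N → ℝ)) := by
        rw [hTapp]; simp
      have e := DFunLike.congr_fun h4
        ((Pi.single i 1 : Fin n → ℝ), (0 : Fin N → ℝ))
      rw [ContinuousLinearMap.comp_apply, eT, ContinuousLinearMap.smul_apply] at e
      simpa [hg, pdx] using e
    · funext j
      have eT : T ((0 : Fin n → ℝ), (Pi.single j 1 : Fin N → ℝ))
          = ((0 : Fin n → ℝ), lam • (Pi.single j 1 : Fin N → ℝ)) := by
        rw [hTapp]
      have e := DFunLike.congr_fun h4
        ((0 : Fin n → ℝ), (Pi.single j 1 : Fin N → ℝ))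
      rw [ContinuousLinearMap.comp_apply, eT, ContinuousLinearMap.smul_apply] at e
      have e2 : ((0 : Fin n → ℝ), lam • (Pi.single j 1 : Fin N → ℝ))
          = lam • ((0 : Fin n → ℝ), (Pi.single j 1 : Fin N → ℝ)) := by
        simp [Prod.smul_mk]
      rw [e2, _root_.map_smul] at e
      have e3 := smul_right_injective ℝ (ne_of_gt hlam) e
      simpa [hh, pdy] using e3
  -- continuity of the gradients
  have hgc : ContinuousOn g Ω := by
    rw [hg]
    apply continuousOn_pi.2
    intro i
    exact (ContinuousLinearMap.apply ℝ ℝ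
      ((Pi.single i 1 : Fin n → ℝ), (0 : Fin N → ℝ))).continuous.comp_continuousOn hfd
  have hhc : ContinuousOn h Ω := by
    rw [hh]
    apply continuousOn_pi.2
    intro j
    exact (ContinuousLinearMap.apply ℝ ℝ
      ((0 : Fin n → ℝ), (Pi.single j 1 : Fin N → ℝ))).continuous.comp_continuousOn hfd
  -- the compact normalized θ-set
  set S1 : Set (Fin N → ℝ) := closure A ∩ Metric.sphere 0 1 with hS1
  have hS1c : IsCompact S1 :=
    (isCompact_sphere (0 : Fin N → ℝ) 1).inter_left isClosed_closure
  have hS1ne : ∀ θ ∈ S1, θ ≠ 0 := by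
    intro θ hθ h0
    have hn1 : ‖θ‖ = 1 := mem_sphere_zero_iff_norm.1 hθ.2
    rw [h0, norm_zero] at hn1
    exact zero_ne_one hn1
  have hKSΩ : K ×ˢ S1 ⊆ Ω := by
    rintro ⟨x, θ⟩ ⟨hx, hθ⟩
    exact ⟨hKU hx, hS1ne θ hθ⟩
  -- bound on the x-gradient
  obtain ⟨C0, hC0⟩ := (hK.prod hS1c).exists_bound_of_continuousOn (hgc.mono hKSΩ)
  set C : ℝ := max C0 1 with hCdef
  have hCpos : (0 : ℝ) < C := lt_of_lt_of_le one_pos (le_max_right _ _)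
  have hCbound : ∀ x ∈ K, ∀ θ ∈ A, ‖g (x, θ)‖ ≤ C * ‖θ‖ := by
    intro x hx θ hθ
    have hθ0 := hA0 θ hθ
    have hr : (0 : ℝ) < ‖θ‖ := norm_pos_iff.2 hθ0
    set u : Fin N → ℝ := ‖θ‖⁻¹ • θ with hu
    have huA : u ∈ A := hAcone θ hθ _ (inv_pos.2 hr)
    have hun : ‖u‖ = 1 := by
      rw [hu, norm_smul, Real.norm_eq_abs, abs_of_pos (inv_pos.2 hr)]
      field_simp
    have hθu : ‖θ‖ • u = θ := by
      rw [hu, smul_smul, mul_inv_cancel₀ (ne_of_gt hr), one_smul]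
    have hkey := (key x (hKU hx) u (hA0 u huA) ‖θ‖ hr).1
    have hmemu : (x, u) ∈ K ×ˢ S1 :=
      ⟨hx, subset_closure huA, mem_sphere_zero_iff_norm.2 hun⟩
    have hgθ : g (x, θ) = ‖θ‖ • g (x, u) := by
      conv_lhs => rw [← hθu]
      exact hkey
    rw [hgθ, norm_smul, Real.norm_eq_abs, abs_norm]
    have hb := hC0 (x, u) hmemu
    have hC0C : C0 ≤ C := le_max_left _ _
    nlinarith [norm_nonneg (g (x, u))]
  -- the compact normalized total set
  set BV : Set (Fin n → ℝ) := (closure V ∪ {0}) ∩ Metric.closedBall 0 (2 * C) with hBV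
  have hBVc : IsCompact BV :=
    (isCompact_closedBall (0 : Fin n → ℝ) (2 * C)).inter_left
      (isClosed_closure.union isClosed_singleton)
  set Tset : Set ((Fin n → ℝ) × ((Fin N → ℝ) × (Fin n → ℝ))) := K ×ˢ (S1 ×ˢ BV) with hTset
  have hTc : IsCompact Tset := hK.prod (hS1c.prod hBVc)
  set F : (Fin n → ℝ) × ((Fin N → ℝ) × (Fin n → ℝ)) → ℝ :=
    fun q => ‖g (q.1, q.2.1) - q.2.2‖ + ‖q.2.1‖ * ‖h (q.1, q.2.1)‖ with hF
  have hπ : Set.MapsTo (fun q : (Fin n → ℝ) × ((Fin N → ℝ) × (Fin n → ℝ)) => (q.1, q.2.1))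
      Tset Ω := by
    rintro ⟨x, θ, ξ⟩ ⟨hx, hθ, _⟩
    exact ⟨hKU hx, hS1ne θ hθ⟩
  have hπc : ContinuousOn (fun q : (Fin n → ℝ) × ((Fin N → ℝ) × (Fin n → ℝ)) => (q.1, q.2.1))
      Tset := (continuous_fst.prodMk (continuous_fst.comp continuous_snd)).continuousOn
  have hFc : ContinuousOn F Tset := by
    have h1 : ContinuousOn (fun q : (Fin n → ℝ) × ((Fin N → ℝ) × (Fin n → ℝ)) =>
        g (q.1, q.2.1) - q.2.2) Tset :=
      (hgc.comp hπc hπ).sub (continuous_snd.snd.continuousOn)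
    have h2 : ContinuousOn (fun q : (Fin n → ℝ) × ((Fin N → ℝ) × (Fin n → ℝ)) =>
        h (q.1, q.2.1)) Tset := hhc.comp hπc hπ
    exact h1.norm.add ((continuous_snd.fst.norm.continuousOn).mul h2.norm)
  have hFpos : ∀ q ∈ Tset, 0 < F q := by
    rintro ⟨x, θ, ξ⟩ ⟨hx, hθ, hξ⟩
    have hθn : ‖θ‖ = 1 := mem_sphere_zero_iff_norm.1 hθ.2
    have hθ0 : θ ≠ 0 := hS1ne θ hθ
    have hθA : θ ∈ A := hAclosed θ hθ0 hθ.1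
    have hFval : F (x, θ, ξ) = ‖g (x, θ) - ξ‖ + ‖θ‖ * ‖h (x, θ)‖ := rfl
    rcases (add_nonneg (norm_nonneg (g (x, θ) - ξ))
        (mul_nonneg (norm_nonneg θ) (norm_nonneg (h (x, θ)))) :
        (0 : ℝ) ≤ ‖g (x, θ) - ξ‖ + ‖θ‖ * ‖h (x, θ)‖).lt_or_eq with hlt | heq
    · rw [hFval]; exact hlt
    exfalso
    have ha : ‖g (x, θ) - ξ‖ = 0 := by
      nlinarith [norm_nonneg (g (x, θ) - ξ), mul_nonneg (norm_nonneg θ) (norm_nonneg (h (x, θ)))]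
    have hb : ‖h (x, θ)‖ = 0 := by
      rw [hθn] at heq
      nlinarith [norm_nonneg (g (x, θ) - ξ), norm_nonneg (h (x, θ))]
    have hgξ : g (x, θ) = ξ := sub_eq_zero.1 (norm_eq_zero.1 ha)
    have hh0 : ∀ j, pdy j φ (x, θ) = 0 := fun j => congrFun (norm_eq_zero.1 hb) j
    by_cases hξ0 : ξ = 0
    · subst hξ0
      have hg0 : ∀ i, pdx i φ (x, θ) = 0 := fun i => congrFun hgξ i
      rcases hd x hx θ hθ0 with ⟨i, hi⟩ | ⟨j, hj⟩
      · exact hi (hg0 i)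
      · exact hj (hh0 j)
    · have hξV : ξ ∈ V := by
        apply hVclosed ξ hξ0
        rcases hξ.1 with h' | h'
        · exact h'
        · exact absurd h' (by simpa using hξ0)
      apply hnc x hx θ hθA hh0
      show g (x, θ) ∈ V
      rw [hgξ]
      exact hξV
  obtain ⟨m', hm', hmmin⟩ : ∃ m' > (0:ℝ), ∀ q ∈ Tset, m' ≤ F q := by
    rcases Tset.eq_empty_or_nonempty with he | hne
    · exact ⟨1, one_pos, by simp [he]⟩
    · obtain ⟨q0, hq0, hq0min⟩ := hTc.exists_isMinOn hne hFc
      exact ⟨F q0, hFpos q0 hq0, fun q hq => isMinOn_iff.1 hq0min q hq⟩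
  -- conclusion
  set c : ℝ := min C m' / (1 + 2 * C) with hcdef
  have hcpos : 0 < c := div_pos (lt_min hCpos hm') (by positivity)
  have hc0 : 0 ≤ c := le_of_lt hcpos
  have hc1 : c * (1 + 2 * C) = min C m' := div_mul_cancel₀ _ (by positivity)
  refine ⟨c, hcpos, ?_⟩
  intro x hx θ hθ ξ hξ
  have hθ0 : θ ≠ 0 := hA0 θ hθ
  have hr : (0 : ℝ) < ‖θ‖ := norm_pos_iff.2 hθ0
  show ‖g (x, θ) - ξ‖ + ‖θ‖ * ‖h (x, θ)‖ ≥ c * (‖θ‖ + ‖ξ‖)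
  rcases le_or_gt ‖ξ‖ (2 * C * ‖θ‖) with hcase | hcase
  · -- normalized case
    set θ' : Fin N → ℝ := ‖θ‖⁻¹ • θ with hθ'def
    set ξ' : Fin n → ℝ := ‖θ‖⁻¹ • ξ with hξ'def
    have hθ'A : θ' ∈ A := hAcone θ hθ _ (inv_pos.2 hr)
    have hθ'n : ‖θ'‖ = 1 := by
      rw [hθ'def, norm_smul, Real.norm_eq_abs, abs_of_pos (inv_pos.2 hr)]
      field_simp
    have hξ'V : ξ' ∈ V := hVcone ξ hξ _ (inv_pos.2 hr)
    have hξ'n : ‖ξ'‖ ≤ 2 * C := by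
      rw [hξ'def, norm_smul, Real.norm_eq_abs, abs_of_pos (inv_pos.2 hr), inv_mul_eq_div,
        div_le_iff₀ hr]
      linarith
    have hq : (x, θ', ξ') ∈ Tset :=
      ⟨hx, ⟨⟨subset_closure hθ'A, mem_sphere_zero_iff_norm.2 hθ'n⟩,
        ⟨Or.inl (subset_closure hξ'V), mem_closedBall_zero_iff.2 hξ'n⟩⟩⟩
    have hFq := hmmin (x, θ', ξ') hq
    have hrθ : ‖θ‖ • θ' = θ := by
      rw [hθ'def, smul_smul, mul_inv_cancel₀ (ne_of_gt hr), one_smul]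
    have hrξ : ‖θ‖ • ξ' = ξ := by
      rw [hξ'def, smul_smul, mul_inv_cancel₀ (ne_of_gt hr), one_smul]
    have hkg : g (x, θ) = ‖θ‖ • g (x, θ') := by
      conv_lhs => rw [← hrθ]
      exact (key x (hKU hx) θ' (hA0 θ' hθ'A) ‖θ‖ hr).1
    have hkh : h (x, θ) = h (x, θ') := by
      conv_lhs => rw [← hrθ]
      exact (key x (hKU hx) θ' (hA0 θ' hθ'A) ‖θ‖ hr).2
    have hLHS : ‖g (x, θ) - ξ‖ + ‖θ‖ * ‖h (x, θ)‖ = ‖θ‖ * F (x, θ', ξ') := by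
      rw [hkg, hkh, ← hrξ, ← smul_sub, norm_smul, Real.norm_eq_abs, abs_norm]
      have hFval : F (x, θ', ξ') = ‖g (x, θ') - ξ'‖ + ‖θ'‖ * ‖h (x, θ')‖ := rfl
      rw [hFval, hθ'n]
      ring
    rw [ge_iff_le, hLHS]
    have p1 : c * (‖θ‖ + ‖ξ‖) ≤ c * ((1 + 2 * C) * ‖θ‖) :=
      mul_le_mul_of_nonneg_left (by linarith) hc0
    have p2 : c * ((1 + 2 * C) * ‖θ‖) = min C m' * ‖θ‖ := by
      rw [show c * ((1 + 2 * C) * ‖θ‖) = c * (1 + 2 * C) * ‖θ‖ from by ring, hc1]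
    have p3 : min C m' * ‖θ‖ ≤ m' * ‖θ‖ :=
      mul_le_mul_of_nonneg_right (min_le_right _ _) hr.le
    have p4 : m' * ‖θ‖ ≤ F (x, θ', ξ') * ‖θ‖ :=
      mul_le_mul_of_nonneg_right hFq hr.le
    nlinarith
  · -- far case
    have htri : ‖ξ‖ - ‖g (x, θ)‖ ≤ ‖g (x, θ) - ξ‖ := by
      rw [norm_sub_rev]
      exact norm_sub_norm_le ξ (g (x, θ))
    have hb := hCbound x hx θ hθ
    have hB : 0 ≤ ‖θ‖ * ‖h (x, θ)‖ := mul_nonneg (norm_nonneg _) (norm_nonneg _)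
    have h2 : min C m' ≤ C := min_le_left _ _
    have h5 : 0 ≤ (C - c * (1 + 2 * C)) * ‖ξ‖ :=
      mul_nonneg (by linarith) (norm_nonneg ξ)
    have h6 : 0 ≤ C * (‖ξ‖ - 2 * C * ‖θ‖) := mul_nonneg hCpos.le (by linarith)
    have h7 : 0 ≤ c * (‖ξ‖ - 2 * C * ‖θ‖) := mul_nonneg hc0 (by linarith)
    have key2 : c * (‖θ‖ + ‖ξ‖) ≤ ‖ξ‖ - C * ‖θ‖ := by nlinarith [hCpos, hc0]
    linarith
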